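/- For every exponent p ∈ (0,α) with α ∈ (0,2), the integral γ(α,p) = ∫_0^1 (t^p − 1)(1 − t^{α−p−1}) / (1−t)^{1+α} dt converges (is finite), i.e. the integrand is integrable on (0,1). -/

import Mathlib

open Set MeasureTheory

/-- For `α ∈ (0,2)` and `p ∈ (0,α)`, the integrand of `γ(α,p)` is integrable on `(0,1)`. -/
theorem gamma_integrand_integrable (α p : ℝ) (hα : 0 < α) (hα2 : α < 2)
    (hp : 0 < p) (hpα : p < α) :
    MeasureTheory.IntegrableOn
      (fun t : ℝ => (t ^ p - 1) * (1 - t ^ (α - p - 1)) / (1 - t) ^ (1 + α))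
      (Ioo (0 : ℝ) 1) := by
  set q : ℝ := α - p - 1 with hqdef
  have hq1 : -1 < q := by unfold q; linarith
  have hq2 : q < 1 := by unfold q; linarith
  have hcont : ContinuousOn (fun t : ℝ => (t ^ p - 1) * (1 - t ^ q) / (1 - t) ^ (1 + α))
      (Ioo (0:ℝ) 1) := by
    apply ContinuousOn.div
    · exact ((continuousOn_id.rpow_const (fun x hx => Or.inl (ne_of_gt hx.1))).sub
        continuousOn_const).mul
        (continuousOn_const.sub (continuousOn_id.rpow_const (fun x hx => Or.inl (ne_of_gt hx.1))))
    · exact (continuousOn_const.sub continuousOn_id).rpow_const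
        (fun x hx => Or.inl (by have := hx.2; intro h; simp only [Pi.sub_apply, id] at h; linarith [sub_eq_zero.mp h]))
    · intro x hx
      exact (Real.rpow_pos_of_pos (by linarith [hx.2]) _).ne'
  -- Part A : on Ioc 0 (1/2)
  have hA : IntegrableOn (fun t : ℝ => (t ^ p - 1) * (1 - t ^ q) / (1 - t) ^ (1 + α))
      (Ioc (0:ℝ) (1/2)) := by
    have hsub : Ioc (0:ℝ) (1/2) ⊆ Ioo (0:ℝ) 1 := fun x hx => ⟨hx.1, by linarith [hx.2]⟩
    have hg : IntegrableOn (fun t : ℝ => (2:ℝ) ^ (1+α) * (1 + t ^ q)) (Ioc (0:ℝ) (1/2)) := by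
      have h1 : IntegrableOn (fun t : ℝ => t ^ q) (Ioc (0:ℝ) (1/2)) :=
        (intervalIntegrable_iff_integrableOn_Ioc_of_le (by norm_num)).mp
          (intervalIntegral.intervalIntegrable_rpow' hq1)
      have h2 : IntegrableOn (fun _ : ℝ => (1:ℝ)) (Ioc (0:ℝ) (1/2)) :=
        integrableOn_const measure_Ioc_lt_top.ne
      exact (h2.add h1).const_mul _
    refine hg.integrable.mono' ((hcont.mono hsub).aestronglyMeasurable measurableSet_Ioc) ?_
    filter_upwards [ae_restrict_mem measurableSet_Ioc] with t ht
    obtain ⟨ht0, ht2⟩ := ht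
    have ht1 : t < 1 := by linarith
    have hu : (0:ℝ) < 1 - t := by linarith
    have hd : (0:ℝ) < (1 - t) ^ (1 + α) := Real.rpow_pos_of_pos hu _
    have htp : t ^ p ≤ 1 := Real.rpow_le_one ht0.le ht1.le hp.le
    have htp0 : (0:ℝ) < t ^ p := Real.rpow_pos_of_pos ht0 _
    have htq0 : (0:ℝ) < t ^ q := Real.rpow_pos_of_pos ht0 _
    rw [Real.norm_eq_abs, abs_div, abs_of_pos hd, div_le_iff₀ hd]
    have hnum : |(t ^ p - 1) * (1 - t ^ q)| ≤ 1 + t ^ q := by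
      rw [abs_mul]
      calc |t ^ p - 1| * |1 - t ^ q| ≤ 1 * (1 + t ^ q) := by
            apply mul_le_mul
            · rw [abs_sub_comm, abs_of_nonneg (by linarith)]; linarith
            · rw [abs_le]; constructor <;> nlinarith
            · positivity
            · norm_num
        _ = 1 + t ^ q := one_mul _
    have hge1 : (1:ℝ) ≤ (2:ℝ) ^ (1+α) * (1 - t) ^ (1+α) := by
      rw [← Real.mul_rpow (by norm_num) hu.le]
      exact Real.one_le_rpow (by linarith) (by linarith)
    calc |(t ^ p - 1) * (1 - t ^ q)| ≤ (1 + t ^ q) * 1 := by rw [mul_one]; exact hnum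
      _ ≤ (1 + t ^ q) * ((2:ℝ) ^ (1+α) * (1 - t) ^ (1+α)) :=
          mul_le_mul_of_nonneg_left hge1 (by positivity)
      _ = (2:ℝ) ^ (1+α) * (1 + t ^ q) * (1 - t) ^ (1+α) := by ring
  -- Part B : on Ico (1/2) 1
  have hB : IntegrableOn (fun t : ℝ => (t ^ p - 1) * (1 - t ^ q) / (1 - t) ^ (1 + α))
      (Ico (1/2 : ℝ) 1) := by
    have hsub : Ico (1/2:ℝ) 1 ⊆ Ioo (0:ℝ) 1 := fun x hx => ⟨by linarith [hx.1], hx.2⟩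
    have hg : IntegrableOn (fun t : ℝ => 2 * (1 + p) * (1 - t) ^ (1 - α)) (Ico (1/2:ℝ) 1) := by
      have h1 : IntervalIntegrable (fun x : ℝ => x ^ (1 - α)) volume 0 (1/2) :=
        intervalIntegral.intervalIntegrable_rpow' (by linarith)
      have h2 := (h1.comp_sub_left 1).symm
      norm_num at h2
      have h3 : IntegrableOn (fun x : ℝ => (1 - x) ^ (1 - α)) (Ico (1/2:ℝ) 1) :=
        (intervalIntegrable_iff_integrableOn_Ico_of_le (by norm_num)).mp h2
      exact h3.const_mul _
    refine hg.integrable.mono' ((hcont.mono hsub).aestronglyMeasurable measurableSet_Ico) ?_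
    filter_upwards [ae_restrict_mem measurableSet_Ico] with t ht
    obtain ⟨ht2, ht1⟩ := ht
    have ht0 : (0:ℝ) < t := by linarith
    have hu : (0:ℝ) < 1 - t := by linarith
    have hd : (0:ℝ) < (1 - t) ^ (1 + α) := Real.rpow_pos_of_pos hu _
    have hb1 : |t ^ p - 1| ≤ (1 + p) * (1 - t) := by
      have htp : t ^ p ≤ 1 := Real.rpow_le_one ht0.le ht1.le hp.le
      rw [abs_sub_comm, abs_of_nonneg (by linarith)]
      rcases le_or_gt p 1 with hple | hpgt
      · have h := Real.rpow_le_rpow_of_exponent_ge ht0 ht1.le hple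
        rw [Real.rpow_one] at h
        nlinarith
      · have hber := one_add_mul_self_le_rpow_one_add (s := t - 1) (by linarith) hpgt.le
        have he : (1 : ℝ) + (t - 1) = t := by ring
        rw [he] at hber
        nlinarith
    have hb2 : |1 - t ^ q| ≤ 2 * (1 - t) := by
      rcases le_or_gt 0 q with hq0 | hq0
      · have htq : t ^ q ≤ 1 := Real.rpow_le_one ht0.le ht1.le hq0
        have h := Real.rpow_le_rpow_of_exponent_ge ht0 ht1.le hq2.le
        rw [Real.rpow_one] at h
        rw [abs_of_nonneg (by linarith)]
        linarith
      · -- q < 0 : t^q ≥ 1, and t^q - 1 = t^q (1 - t^{-q}) ≤ 2 (1 - t)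
        have htq1 : (1:ℝ) ≤ t ^ q :=
          Real.one_le_rpow_of_pos_of_le_one_of_nonpos ht0 ht1.le hq0.le
        have hqm1 : t ^ q ≤ t ^ (-1:ℝ) :=
          Real.rpow_le_rpow_of_exponent_ge ht0 ht1.le hq1.le
        have hinv : t ^ (-1:ℝ) = t⁻¹ := Real.rpow_neg_one t
        have hle2 : t ^ q ≤ 2 := by
          rw [hinv] at hqm1
          have : t⁻¹ ≤ 2 := by rw [inv_le_comm₀ ht0 (by norm_num)]; linarith
          linarith
        have hmq : t ≤ t ^ (-q) := by
          have h := Real.rpow_le_rpow_of_exponent_ge ht0 ht1.le (show -q ≤ 1 by linarith)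
          rwa [Real.rpow_one] at h
        have hprod : t ^ q * t ^ (-q) = 1 := by
          rw [← Real.rpow_add ht0]; simp
        have htmq1 : t ^ (-q) ≤ 1 := Real.rpow_le_one ht0.le ht1.le (by linarith)
        rw [abs_sub_comm, abs_of_nonneg (by linarith)]
        nlinarith
    rw [Real.norm_eq_abs, abs_div, abs_of_pos hd, div_le_iff₀ hd]
    have key : (1 - t) * (1 - t) ≤ (1 - t) ^ (1 - α) * (1 - t) ^ (1 + α) := by
      rw [← Real.rpow_add hu]
      have : (1 - α) + (1 + α) = 2 := by ring
      rw [this, Real.rpow_two]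
      nlinarith
    calc |(t ^ p - 1) * (1 - t ^ q)|
        ≤ ((1 + p) * (1 - t)) * (2 * (1 - t)) := by
          rw [abs_mul]
          apply mul_le_mul hb1 hb2 (abs_nonneg _) (by positivity)
      _ = 2 * (1 + p) * ((1 - t) * (1 - t)) := by ring
      _ ≤ 2 * (1 + p) * ((1 - t) ^ (1 - α) * (1 - t) ^ (1 + α)) := by
          have h2p : (0:ℝ) ≤ 2 * (1 + p) := by positivity
          exact mul_le_mul_of_nonneg_left key h2p
      _ = 2 * (1 + p) * (1 - t) ^ (1 - α) * (1 - t) ^ (1 + α) := by ring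
  have hsub : Ioo (0:ℝ) 1 ⊆ Ioc (0:ℝ) (1/2) ∪ Ico (1/2:ℝ) 1 := by
    intro x hx
    rcases le_or_gt x (1/2) with h | h
    · exact Or.inl ⟨hx.1, h⟩
    · exact Or.inr ⟨h.le, hx.2⟩
  exact (hA.union hB).mono_set hsub
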